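/- arXiv:0910.2736 — 4 statements merged into one kernel-verified Lean document; each statement's English description precedes it below -/
import Mathlib

section
/- Let a, b : ℕ → ℂ with b_i ≠ 0 for all i, and let A, B be the canonical numerators and denominators of the continued fraction K(a_n/b_n). Then for every n ∈ ℕ: B_{n+1} = (∏_{i=0}^{n} b_i) · Σ_{S ∈ Sp(1,n)} g^S and A_{n+1} = (∏_{i=0}^{n} b_i) · (a_0/b_0) · Σ_{S ∈ Sp(2,n)} g^S. -/
open Finset

/-- `Sp q m` is the collection of all sparse subsets of `{q, q+1, …, m}`
(sparse: any two distinct elements differ by at least 2). -/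
def Sp (q m : ℕ) : Finset (Finset ℕ) :=
  (Finset.Icc q m).powerset.filter (fun S => ∀ i ∈ S, ∀ j ∈ S, i < j → 2 ≤ j - i)

/-- `g a b i = a i / (b (i-1) * b i)`. -/
noncomputable def g (a b : ℕ → ℂ) (i : ℕ) : ℂ := a i / (b (i - 1) * b i)

/-- `gProd a b S = ∏ i ∈ S, g a b i` (the empty product is 1). -/
noncomputable def gProd (a b : ℕ → ℂ) (S : Finset ℕ) : ℂ := ∏ i ∈ S, g a b i

/-- Canonical numerators of the continued fraction `K (a n / b n)`. -/
noncomputable def contA (a b : ℕ → ℂ) : ℕ → ℂ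
  | 0 => 0
  | 1 => a 0
  | (n + 2) => b (n + 1) * contA a b (n + 1) + a (n + 1) * contA a b n

/-- Canonical denominators of the continued fraction `K (a n / b n)`. -/
noncomputable def contB (a b : ℕ → ℂ) : ℕ → ℂ
  | 0 => 1
  | 1 => b 0
  | (n + 2) => b (n + 1) * contB a b (n + 1) + a (n + 1) * contB a b n

lemma mem_Sp {q m : ℕ} {S : Finset ℕ} :
    S ∈ Sp q m ↔ S ⊆ Finset.Icc q m ∧ ∀ i ∈ S, ∀ j ∈ S, i < j → 2 ≤ j - i := by
  simp [Sp, Finset.mem_filter, Finset.mem_powerset]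

lemma Sp_of_lt {q m : ℕ} (h : m < q) : Sp q m = {∅} := by
  ext S
  simp only [mem_Sp, Finset.mem_singleton]
  constructor
  · rintro ⟨hsub, -⟩
    rw [Finset.Icc_eq_empty_of_lt h, Finset.subset_empty] at hsub
    exact hsub
  · rintro rfl
    simp

lemma Sp_rec (a b : ℕ → ℂ) (q m : ℕ) (hq : 1 ≤ q) (hqm : q ≤ m + 1) :
    ∑ S ∈ Sp q (m+1), gProd a b S
      = ∑ S ∈ Sp q m, gProd a b S + g a b (m+1) * ∑ S ∈ Sp q (m-1), gProd a b S := by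
  rw [← Finset.sum_filter_add_sum_filter_not (Sp q (m+1)) (fun S => (m+1) ∈ S)]
  have h1 : (Sp q (m+1)).filter (fun S => (m+1) ∉ S) = Sp q m := by
    ext S
    simp only [Finset.mem_filter, mem_Sp]
    constructor
    · rintro ⟨⟨hsub, hsp⟩, hnot⟩
      refine ⟨fun i hi => ?_, hsp⟩
      have := hsub hi
      rw [Finset.mem_Icc] at this ⊢
      have : q ≤ i ∧ i ≤ m + 1 := this
      have hne : i ≠ m + 1 := fun h => hnot (h ▸ hi)
      omega
    · rintro ⟨hsub, hsp⟩
      refine ⟨⟨fun i hi => ?_, hsp⟩, fun hmem => ?_⟩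
      · have := hsub hi; rw [Finset.mem_Icc] at this ⊢; omega
      · have := hsub hmem; rw [Finset.mem_Icc] at this; omega
  have h2 : (Sp q (m+1)).filter (fun S => (m+1) ∈ S)
      = (Sp q (m-1)).image (insert (m+1)) := by
    ext S
    simp only [Finset.mem_filter, mem_Sp, Finset.mem_image]
    constructor
    · rintro ⟨⟨hsub, hsp⟩, hmem⟩
      refine ⟨S.erase (m+1), ⟨fun i hi => ?_, ?_⟩, ?_⟩
      · have hiS := Finset.mem_of_mem_erase hi
        have hne := Finset.ne_of_mem_erase hi
        have h3 := hsub hiS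
        rw [Finset.mem_Icc] at h3 ⊢
        have h4 : 2 ≤ (m+1) - i := hsp i hiS (m+1) hmem (by omega)
        omega
      · intro i hi j hj hij
        exact hsp i (Finset.mem_of_mem_erase hi) j (Finset.mem_of_mem_erase hj) hij
      · rw [Finset.insert_erase hmem]
    · rintro ⟨T, ⟨hsub, hsp⟩, rfl⟩
      have hT : ∀ i ∈ T, q ≤ i ∧ i ≤ m - 1 := by
        intro i hi; have := hsub hi; rw [Finset.mem_Icc] at this; exact this
      refine ⟨⟨fun i hi => ?_, ?_⟩, Finset.mem_insert_self _ _⟩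
      · rw [Finset.mem_Icc]
        rcases Finset.mem_insert.mp hi with rfl | hi
        · omega
        · have := hT i hi; omega
      · intro i hi j hj hij
        rcases Finset.mem_insert.mp hi with rfl | hi
        · rcases Finset.mem_insert.mp hj with rfl | hj
          · omega
          · have := hT j hj; omega
        · rcases Finset.mem_insert.mp hj with rfl | hj
          · have := hT i hi; have := hq; omega
          · exact hsp i hi j hj hij
  rw [h1, h2, add_comm]
  congr 1
  rw [Finset.sum_image]
  · rw [Finset.mul_sum]
    refine Finset.sum_congr rfl fun S hS => ?_
    have hnot : (m+1) ∉ S := by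
      rw [mem_Sp] at hS
      intro hmem
      have := hS.1 hmem; rw [Finset.mem_Icc] at this
      have := hq; omega
    rw [gProd, Finset.prod_insert hnot]; rfl
  · intro S hS T hT hST
    have hS' : (m+1) ∉ S := by
      rw [Finset.mem_coe, mem_Sp] at hS; intro hmem
      have := hS.1 hmem; rw [Finset.mem_Icc] at this; omega
    have hT' : (m+1) ∉ T := by
      rw [Finset.mem_coe, mem_Sp] at hT; intro hmem
      have := hT.1 hmem; rw [Finset.mem_Icc] at this; omega
    have := congrArg (fun U => Finset.erase U (m+1)) hST
    simpa [Finset.erase_insert hS', Finset.erase_insert hT'] using this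

/-- Sparse-subset expansion of the canonical numerators and denominators of a
continued fraction. -/
theorem contA_contB_sparse_expansion (a b : ℕ → ℂ) (hb : ∀ i, b i ≠ 0) :
    ∀ n : ℕ,
      contB a b (n + 1) = (∏ i ∈ Finset.range (n + 1), b i) *
        ∑ S ∈ Sp 1 n, gProd a b S ∧
      contA a b (n + 1) = (∏ i ∈ Finset.range (n + 1), b i) * (a 0 / b 0) *
        ∑ S ∈ Sp 2 n, gProd a b S := by
  intro n
  induction n using Nat.twoStepInduction with
  | zero =>
    constructor
    · simp [contB, Sp_of_lt (by norm_num : (0:ℕ) < 1), gProd]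
    · have hb0 := hb 0
      simp [contA, Sp_of_lt (by norm_num : (0:ℕ) < 2), gProd]
      field_simp
  | one =>
    constructor
    · rw [Sp_rec a b 1 0 le_rfl (by omega)]
      simp [contB, Sp_of_lt (by norm_num : (0:ℕ) < 1), gProd, g,
        Finset.prod_range_succ]
      field_simp [hb 0, hb 1]
    · simp [contA, Sp_of_lt (by norm_num : (1:ℕ) < 2), gProd,
        Finset.prod_range_succ]
      field_simp [hb 0]
  | more n ih1 ih2 =>
    obtain ⟨hB1, hA1⟩ := ih1
    obtain ⟨hB2, hA2⟩ := ih2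
    have hP : ∀ k, (∏ i ∈ Finset.range (k + 2), b i)
        = (∏ i ∈ Finset.range (k + 1), b i) * b (k + 1) := fun k =>
      Finset.prod_range_succ _ _
    have hg : g a b (n + 2) = a (n + 2) / (b (n + 1) * b (n + 2)) := rfl
    constructor
    · show b (n + 2) * contB a b (n + 2) + a (n + 2) * contB a b (n + 1) = _
      rw [Sp_rec a b 1 (n + 1) le_rfl (by omega)]
      simp only [Nat.add_sub_cancel]
      rw [hB1, hB2, hP (n+1), hP n, hg]
      field_simp [hb 0, hb (n+1), hb (n+2)]
    · show b (n + 2) * contA a b (n + 2) + a (n + 2) * contA a b (n + 1) = _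
      rw [Sp_rec a b 2 (n + 1) (by omega) (by omega)]
      simp only [Nat.add_sub_cancel]
      rw [hA1, hA2, hP (n+1), hP n, hg]
      field_simp [hb 0, hb (n+1), hb (n+2)]
end

section
/- Let c ∈ ℂ not be a nonpositive integer and z ∈ ℂ with ₀F₁(c; z) ≠ 0. Define a, b : ℕ → ℂ by a_0 = c, a_n = z for n ≥ 1, and b_n = c + n for n ≥ 0, and let A, B be the canonical numerators and denominators of the continued fraction K(a_n/b_n) = c/(c + z/((c+1) + z/((c+2) + ⋯))). Then the approximants A_n/B_n converge to ₀F₁(c+1; z)/₀F₁(c; z) as n → ∞. -/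
open Finset Filter Topology

/-- Pochhammer symbol `(c)_k = c (c+1) ⋯ (c+k-1)`, with `(c)_0 = 1`. -/
noncomputable def poch (c : ℂ) (k : ℕ) : ℂ := ∏ j ∈ Finset.range k, (c + j)

/-- The hypergeometric function `₀F₁(c; z) = ∑_{k=0}^∞ z^k / ((c)_k k!)`. -/
noncomputable def F01 (c z : ℂ) : ℂ := ∑' k : ℕ, z ^ k / (poch c k * (Nat.factorial k))

lemma poch_ne_zero {c : ℂ} (hc : ∀ n : ℕ, c ≠ -(n : ℂ)) (k : ℕ) : poch c k ≠ 0 := by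
  refine Finset.prod_ne_zero_iff.2 fun j _ => ?_
  intro h
  exact hc j (by linear_combination h)

lemma poch_succ (c : ℂ) (n : ℕ) : poch c (n + 1) = poch c n * (c + n) :=
  Finset.prod_range_succ _ n

lemma poch_succ' (c : ℂ) (n : ℕ) : poch c (n + 1) = c * poch (c + 1) n := by
  rw [poch, poch, Finset.prod_range_succ',
    Finset.prod_congr rfl (fun j _ => show c + ((j + 1 : ℕ) : ℂ) = (c + 1) + j by push_cast; ring)]
  push_cast
  ring

lemma poch_add (c : ℂ) (p q : ℕ) :
    poch c (p + q) = poch c p * ∏ j ∈ Finset.range q, (c + p + j) := by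
  rw [poch, Finset.prod_range_add]
  congr 1
  exact Finset.prod_congr rfl fun j _ => by push_cast; ring

lemma poch_split (c : ℂ) (p q : ℕ) : poch c (p + q) = poch c p * poch (c + p) q := by
  rw [poch_add]; rfl

noncomputable def wcoef (c z : ℂ) (n k : ℕ) : ℂ :=
  ((n - k).choose k : ℂ) * z ^ k * poch (c + k) (n - 2 * k)

lemma wcoef_eq_zero (c z : ℂ) {n k : ℕ} (h : n < 2 * k) : wcoef c z n k = 0 := by
  have : n - k < k := by omega
  simp [wcoef, Nat.choose_eq_zero_of_lt this]

lemma wcoef_rec (c z : ℂ) (n k : ℕ) :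
    wcoef c z (n + 2) (k + 1)
      = (c + n + 1) * wcoef c z (n + 1) (k + 1) + z * wcoef c z n k := by
  rcases lt_or_ge n (2 * k) with h | h
  · rw [wcoef_eq_zero c z (by omega), wcoef_eq_zero c z (by omega),
      wcoef_eq_zero c z (by omega)]
    ring
  rcases eq_or_lt_of_le h with h' | h'
  · -- n = 2k
    have e1 : n + 2 - (k + 1) = k + 1 := by omega
    have e2 : n + 2 - 2 * (k + 1) = 0 := by omega
    have e3 : n + 1 - (k + 1) = k := by omega
    have e4 : n - k = k := by omega
    have e5 : n - 2 * k = 0 := by omega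
    rw [wcoef, wcoef, wcoef, e1, e2, e3, e4, e5]
    simp [poch, Nat.choose_self, Nat.choose_succ_self]
    ring
  · -- n ≥ 2k+1
    obtain ⟨m, rfl⟩ : ∃ m, n = 2 * k + 1 + m := ⟨n - (2 * k + 1), by omega⟩
    have e1 : 2 * k + 1 + m + 2 - (k + 1) = k + m + 2 := by omega
    have e2 : 2 * k + 1 + m + 2 - 2 * (k + 1) = m + 1 := by omega
    have e3 : 2 * k + 1 + m + 1 - (k + 1) = k + m + 1 := by omega
    have e4 : 2 * k + 1 + m + 1 - 2 * (k + 1) = m := by omega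
    have e5 : 2 * k + 1 + m - k = k + m + 1 := by omega
    have e6 : 2 * k + 1 + m - 2 * k = m + 1 := by omega
    rw [wcoef, wcoef, wcoef, e1, e2, e3, e4, e5, e6]
    have hpas : ((k + m + 2).choose (k + 1) : ℂ)
        = (k + m + 1).choose k + (k + m + 1).choose (k + 1) := by
      exact_mod_cast congrArg (Nat.cast (R := ℂ)) (Nat.choose_succ_succ (k + m + 1) k)
    have hr : ((k + m + 1).choose (k + 1) : ℂ) * (k + 1)
        = ((k + m + 1).choose k : ℂ) * (m + 1) := by
      have := Nat.choose_succ_right_eq (k + m + 1) k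
      rw [show k + m + 1 - k = m + 1 by omega] at this
      exact_mod_cast congrArg (Nat.cast (R := ℂ)) this
    have hp1 : poch (c + ((k : ℂ) + 1)) (m + 1)
        = poch (c + ((k : ℂ) + 1)) m * (c + k + 1 + m) := by
      rw [poch_succ]; ring
    have hp2 : poch (c + (k : ℂ)) (m + 1) = (c + k) * poch (c + (k : ℂ) + 1) m := by
      rw [poch_succ']
    push_cast
    rw [hp1, hp2]
    have hpe : poch (c + (k : ℂ) + 1) m = poch (c + ((k : ℂ) + 1)) m :=
      congrArg (fun x => poch x m) (by ring)
    rw [hpe]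
    linear_combination (z ^ (k + 1) * poch (c + ((k : ℂ) + 1)) m * (c + ↑k + 1 + ↑m)) * hpas
      - (z ^ (k + 1) * poch (c + ((k : ℂ) + 1)) m) * hr

lemma wcoef_zero (c z : ℂ) (n : ℕ) : wcoef c z n 0 = poch c n := by
  simp [wcoef]

lemma contB_eq (c z : ℂ) (a b : ℕ → ℂ) (ha : ∀ n, 1 ≤ n → a n = z)
    (hb : ∀ n, b n = c + n) :
    ∀ n, contB a b n = ∑ k ∈ Finset.range (n + 1), wcoef c z n k := by
  intro n
  induction n using Nat.twoStepInduction with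
  | zero => simp [contB, wcoef_zero, poch]
  | one =>
    rw [show (1:ℕ) + 1 = 2 by rfl, Finset.sum_range_succ, Finset.sum_range_one,
      wcoef_zero]
    have : wcoef c z 1 1 = 0 := wcoef_eq_zero c z (by omega)
    rw [this, contB, hb 0, poch_succ, poch]
    simp
  | more n ih1 ih2 =>
    show b (n + 1) * contB a b (n + 1) + a (n + 1) * contB a b n = _
    rw [ih1, ih2, hb (n + 1), ha (n + 1) (by omega)]
    rw [Finset.sum_range_succ' (wcoef c z (n + 2)) (n + 2)]
    have h1 : ∀ k ∈ Finset.range (n + 2), wcoef c z (n + 2) (k + 1)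
        = (c + n + 1) * wcoef c z (n + 1) (k + 1) + z * wcoef c z n k :=
      fun k _ => wcoef_rec c z n k
    rw [Finset.sum_congr rfl h1, Finset.sum_add_distrib, ← Finset.mul_sum, ← Finset.mul_sum]
    rw [Finset.sum_range_succ (fun k => wcoef c z (n + 1) (k + 1)) (n + 1),
      Finset.sum_range_succ (wcoef c z n) (n + 1),
      wcoef_eq_zero c z (show n + 1 < 2 * (n + 1 + 1) by omega),
      wcoef_eq_zero c z (show n < 2 * (n + 1) by omega),
      Finset.sum_range_succ' (wcoef c z (n + 1)) (n + 1)]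
    have hw0 : wcoef c z (n + 2) 0 = (c + ((n : ℂ) + 1)) * wcoef c z (n + 1) 0 := by
      rw [wcoef_zero, wcoef_zero, poch_succ]
      push_cast
      ring
    rw [hw0]
    push_cast
    ring

lemma choose_mul_factorial (m : ℕ) :
    ∀ k, (k + m).choose k * k.factorial = ∏ j ∈ Finset.range k, (m + 1 + j)
  | 0 => by simp
  | (k + 1) => by
    have h := Nat.add_one_mul_choose_eq (k + m) k
    rw [Finset.prod_range_succ, ← choose_mul_factorial m k,
      show k + 1 + m = (k + m) + 1 by omega, Nat.factorial_succ]
    calc (k + m + 1).choose (k + 1) * ((k + 1) * k.factorial)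
        = ((k + m + 1).choose (k + 1) * (k + 1)) * k.factorial := by ring
      _ = ((k + m + 1) * (k + m).choose k) * k.factorial := by
          rw [← h]
      _ = (k + m).choose k * k.factorial * (m + 1 + k) := by ring

lemma hc_shift {c : ℂ} (hc : ∀ n : ℕ, c ≠ -(n : ℂ)) (k : ℕ) :
    ∀ n : ℕ, c + (k : ℂ) ≠ -(n : ℂ) := by
  intro n h
  exact hc (n + k) (by push_cast; linear_combination h)

lemma wcoef_div {c : ℂ} (hc : ∀ n : ℕ, c ≠ -(n : ℂ)) (z : ℂ) (k m : ℕ) :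
    wcoef c z (2 * k + m) k / poch c (2 * k + m)
      = z ^ k / (poch c k * (k.factorial : ℂ))
          * ∏ j ∈ Finset.range k, (((m : ℂ) + 1 + j) / (c + k + m + j)) := by
  have e1 : 2 * k + m - k = k + m := by omega
  have e2 : 2 * k + m - 2 * k = m := by omega
  rw [wcoef, e1, e2]
  have hsplit : poch c (2 * k + m)
      = poch c k * poch (c + k) m * ∏ j ∈ Finset.range k, (c + k + m + j) := by
    rw [show 2 * k + m = (k + m) + k by omega, poch_add, poch_split]
    congr 1
    exact Finset.prod_congr rfl fun j _ => by push_cast; ring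
  rw [hsplit, Finset.prod_div_distrib]
  have hP : ((k + m).choose k : ℂ) * (k.factorial : ℂ)
      = ∏ j ∈ Finset.range k, ((m : ℂ) + 1 + j) := by
    have := congrArg (Nat.cast (R := ℂ)) (choose_mul_factorial m k)
    push_cast at this
    exact this
  have h1 : poch c k ≠ 0 := poch_ne_zero hc k
  have h2 : poch (c + k) m ≠ 0 := poch_ne_zero (hc_shift hc k) m
  have h3 : (∏ j ∈ Finset.range k, (c + (k : ℂ) + m + j)) ≠ 0 := by
    refine Finset.prod_ne_zero_iff.2 fun j _ => ?_
    intro h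
    exact hc (k + m + j) (by push_cast; linear_combination h)
  have h4 : (k.factorial : ℂ) ≠ 0 := by exact_mod_cast k.factorial_ne_zero
  field_simp
  ring_nf
  ring_nf at hP
  linear_combination z ^ k * hP

lemma tendsto_inv_nat_add (b : ℂ) :
    Tendsto (fun m : ℕ => ((m : ℂ) + b)⁻¹) atTop (𝓝 0) := by
  rw [tendsto_zero_iff_norm_tendsto_zero]
  have hg : Tendsto (fun m : ℕ => ((m : ℝ) - ‖b‖)⁻¹) atTop (𝓝 0) :=
    tendsto_inv_atTop_zero.comp
      (tendsto_atTop_add_const_right atTop (-‖b‖) tendsto_natCast_atTop_atTop)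
  refine squeeze_zero' (Eventually.of_forall fun m => norm_nonneg _) ?_ hg
  filter_upwards [eventually_gt_atTop (⌈‖b‖⌉₊)] with m hm
  have h1 : ‖b‖ < (m : ℝ) := lt_of_le_of_lt (Nat.le_ceil _) (by exact_mod_cast hm)
  have h2 : (m : ℝ) - ‖b‖ ≤ ‖(m : ℂ) + b‖ := by
    have : (m : ℝ) = ‖((m : ℂ) + b) + (-b)‖ := by
      rw [add_neg_cancel_right]; simp
    rw [this]
    have := norm_add_le ((m : ℂ) + b) (-b)
    rw [norm_neg] at this
    linarith
  rw [norm_inv]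
  exact inv_anti₀ (by linarith) h2

lemma tendsto_ratio (p q : ℂ) :
    Tendsto (fun m : ℕ => ((m : ℂ) + p) / ((m : ℂ) + q)) atTop (𝓝 1) := by
  have h : Tendsto (fun m : ℕ => 1 + (p - q) * ((m : ℂ) + q)⁻¹) atTop (𝓝 1) := by
    have := (tendsto_inv_nat_add q).const_mul (p - q)
    simpa using tendsto_const_nhds.add this
  refine h.congr' ?_
  filter_upwards [eventually_gt_atTop (⌈‖q‖⌉₊)] with m hm
  have h1 : ‖q‖ < (m : ℝ) := lt_of_le_of_lt (Nat.le_ceil _) (by exact_mod_cast hm)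
  have h2 : (m : ℂ) + q ≠ 0 := by
    intro h0
    have : (m : ℝ) = ‖q‖ := by
      rw [← Complex.norm_natCast m, show (m : ℂ) = -q by linear_combination h0, norm_neg]
    linarith
  field_simp
  ring

lemma exists_ratio_bound (c : ℂ) (hc : ∀ n : ℕ, c ≠ -(n : ℂ)) :
    ∃ C : ℝ, 0 ≤ C ∧ ∀ s : ℕ, (s : ℝ) ≤ C * ‖c + s‖ := by
  have h0 : ∀ s : ℕ, (0 : ℝ) < ‖c + s‖ := by
    intro s
    rw [norm_pos_iff]
    intro h
    exact hc s (by linear_combination h)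
  have hφ : Tendsto (fun s : ℕ => (s : ℝ) / ‖c + s‖) atTop (𝓝 1) := by
    have := (tendsto_ratio 0 c).norm
    simp only [norm_one] at this
    refine this.congr fun s => ?_
    rw [norm_div]
    congr 1 <;> simp [add_comm]
  obtain ⟨C0, hC0⟩ := hφ.bddAbove_range
  refine ⟨max C0 0, le_max_right _ _, fun s => ?_⟩
  have h1 : (s : ℝ) / ‖c + s‖ ≤ C0 := hC0 ⟨s, rfl⟩
  have := (div_le_iff₀ (h0 s)).1 h1
  calc (s : ℝ) ≤ C0 * ‖c + s‖ := this
    _ ≤ max C0 0 * ‖c + s‖ := by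
        apply mul_le_mul_of_nonneg_right (le_max_left _ _) (norm_nonneg _)

lemma exists_poch_lb (c : ℂ) (hc : ∀ n : ℕ, c ≠ -(n : ℂ)) :
    ∃ P0 : ℝ, 0 < P0 ∧ ∀ k, P0 ≤ ∏ j ∈ Finset.range k, ‖c + (j : ℂ)‖ := by
  have h0 : ∀ s : ℕ, (0 : ℝ) < ‖c + s‖ := by
    intro s
    rw [norm_pos_iff]
    intro h
    exact hc s (by linear_combination h)
  set J := ⌈‖c‖⌉₊ + 1 with hJ
  set Q : ℕ → ℝ := fun k => ∏ j ∈ Finset.range k, min ‖c + (j : ℂ)‖ 1 with hQ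
  have hQpos : ∀ k, 0 < Q k := fun k =>
    Finset.prod_pos fun j _ => lt_min (h0 j) one_pos
  have hQanti : ∀ k l, k ≤ l → Q l ≤ Q k := by
    intro k l hkl
    obtain ⟨d, rfl⟩ : ∃ d, l = k + d := ⟨l - k, by omega⟩
    rw [hQ]
    simp only
    rw [Finset.prod_range_add]
    apply mul_le_of_le_one_right
      (Finset.prod_nonneg fun j _ => le_of_lt (lt_min (h0 j) one_pos))
    exact Finset.prod_le_one (fun j _ => le_of_lt (lt_min (h0 _) one_pos))
      (fun j _ => min_le_right _ _)
  have hQeq : ∀ k, J ≤ k → Q k = Q J := by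
    intro k hk
    induction k, hk using Nat.le_induction with
    | base => rfl
    | succ k hk ih =>
      rw [hQ]
      simp only
      rw [Finset.prod_range_succ]
      have : min ‖c + (k : ℂ)‖ 1 = 1 := by
        apply min_eq_right
        have : (J : ℝ) ≤ ‖c + (k : ℂ)‖ + ‖c‖ := by
          calc (J : ℝ) ≤ (k : ℝ) := by exact_mod_cast hk
            _ = ‖(c + (k : ℂ)) - c‖ := by rw [add_sub_cancel_left]; simp
            _ ≤ ‖c + (k : ℂ)‖ + ‖c‖ := norm_sub_le _ _
        have hJc : ‖c‖ + 1 ≤ (J : ℝ) := by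
          rw [hJ]
          push_cast
          have := Nat.le_ceil ‖c‖
          linarith
        linarith
      rw [this, mul_one]
      exact ih
  refine ⟨Q J, hQpos J, fun k => ?_⟩
  have step1 : Q J ≤ Q k := by
    rcases le_total k J with h | h
    · exact hQanti k J h
    · exact le_of_eq (hQeq k h).symm
  refine le_trans step1 ?_
  apply Finset.prod_le_prod (fun j _ => le_of_lt (lt_min (h0 j) one_pos))
    (fun j _ => min_le_left _ _)

lemma contB_tendsto {c : ℂ} (hc : ∀ n : ℕ, c ≠ -(n : ℂ)) (z : ℂ) (a b : ℕ → ℂ)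
    (ha : ∀ n, 1 ≤ n → a n = z) (hb : ∀ n, b n = c + n) :
    Tendsto (fun n => contB a b n / poch c n) atTop (𝓝 (F01 c z)) := by
  obtain ⟨C, hC0, hC⟩ := exists_ratio_bound c hc
  obtain ⟨P0, hP0, hP⟩ := exists_poch_lb c hc
  set f : ℕ → ℕ → ℂ := fun n k => wcoef c z n k / poch c n with hf
  set g : ℕ → ℂ := fun k => z ^ k / (poch c k * (k.factorial : ℂ)) with hg
  set bound : ℕ → ℝ := fun k => P0⁻¹ * ((C * ‖z‖) ^ k / (k.factorial : ℝ)) with hbd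
  have hpochnorm : ∀ k, ‖poch c k‖ = ∏ j ∈ Finset.range k, ‖c + (j : ℂ)‖ := by
    intro k
    rw [poch]
    exact norm_prod _ _
  have key : Tendsto (fun n => ∑' k, f n k) atTop (𝓝 (∑' k, g k)) := by
    apply tendsto_tsum_of_dominated_convergence (bound := bound)
    · -- summable
      apply Summable.mul_left
      exact Real.summable_pow_div_factorial (C * ‖z‖)
    · -- pointwise limit
      intro k
      have hR : Tendsto (fun m : ℕ =>
          ∏ j ∈ Finset.range k, (((m : ℂ) + 1 + j) / (c + k + m + j))) atTop (𝓝 1) := by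
        have : Tendsto (fun m : ℕ =>
            ∏ j ∈ Finset.range k, (((m : ℂ) + (1 + j)) / ((m : ℂ) + (c + k + j))))
            atTop (𝓝 (∏ _j ∈ Finset.range k, (1 : ℂ))) := by
          apply tendsto_finset_prod
          intro j _
          exact tendsto_ratio (1 + (j : ℂ)) (c + k + j)
        rw [Finset.prod_const_one] at this
        refine this.congr fun m => Finset.prod_congr rfl fun j _ => ?_
        ring_nf
      have hlim : Tendsto (fun n : ℕ => g k *
          ∏ j ∈ Finset.range k, ((((n - 2 * k : ℕ) : ℂ) + 1 + j) / (c + k + (n - 2 * k : ℕ) + j)))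
          atTop (𝓝 (g k)) := by
        have := (hR.comp (tendsto_sub_atTop_nat (2 * k))).const_mul (g k)
        simpa using this
      refine hlim.congr' ?_
      filter_upwards [eventually_ge_atTop (2 * k)] with n hn
      have hm : 2 * k + (n - 2 * k) = n := by omega
      have := wcoef_div hc z k (n - 2 * k)
      rw [hm] at this
      rw [hf]
      simp only
      rw [this]
    · -- bound
      apply Eventually.of_forall
      intro n k
      have hbnn : 0 ≤ bound k := by
        apply mul_nonneg (inv_nonneg.2 hP0.le)
        apply div_nonneg (pow_nonneg (mul_nonneg hC0 (norm_nonneg z)) k)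
        positivity
      rcases lt_or_ge n (2 * k) with h | h
      · rw [hf]
        simp only
        rw [wcoef_eq_zero c z h, zero_div, norm_zero]
        exact hbnn
      · obtain ⟨m, rfl⟩ : ∃ m, n = 2 * k + m := ⟨n - 2 * k, by omega⟩
        rw [hf]
        simp only
        rw [wcoef_div hc z k m, norm_mul]
        have hnormg : ‖g k‖ ≤ ‖z‖ ^ k / (P0 * (k.factorial : ℝ)) := by
          rw [hg]
          simp only
          rw [norm_div, norm_mul, norm_pow]
          apply div_le_div_of_nonneg_left (pow_nonneg (norm_nonneg z) k)
          · positivity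
          · rw [Complex.norm_natCast]
            apply mul_le_mul_of_nonneg_right _ (by positivity)
            rw [hpochnorm]
            exact hP k
        have hprod : ‖∏ j ∈ Finset.range k, (((m : ℂ) + 1 + j) / (c + k + m + j))‖
            ≤ C ^ k := by
          rw [norm_prod]
          calc ∏ j ∈ Finset.range k, ‖((m : ℂ) + 1 + j) / (c + k + m + j)‖
              ≤ ∏ _j ∈ Finset.range k, C := by
                apply Finset.prod_le_prod (fun j _ => norm_nonneg _)
                intro j hj
                rw [Finset.mem_range] at hj
                rw [norm_div]
                have hden : (0 : ℝ) < ‖c + (k : ℂ) + m + j‖ := by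
                  rw [norm_pos_iff]
                  intro h0
                  exact hc (k + m + j) (by push_cast; linear_combination h0)
                rw [div_le_iff₀ hden]
                have e1 : ‖(m : ℂ) + 1 + j‖ = ((m + 1 + j : ℕ) : ℝ) := by
                  rw [← Complex.norm_natCast (m + 1 + j)]
                  congr 1
                  push_cast
                  ring
                have e2 : c + (k : ℂ) + m + j = c + ((k + m + j : ℕ) : ℂ) := by
                  push_cast
                  ring
                rw [e1, e2]
                calc ((m + 1 + j : ℕ) : ℝ) ≤ ((k + m + j : ℕ) : ℝ) := by
                      have : m + 1 + j ≤ k + m + j := by omega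
                      exact_mod_cast this
                  _ ≤ C * ‖c + ((k + m + j : ℕ) : ℂ)‖ := hC (k + m + j)
            _ = C ^ k := by rw [Finset.prod_const, Finset.card_range]
        calc ‖g k‖ * ‖∏ j ∈ Finset.range k, (((m : ℂ) + 1 + j) / (c + k + m + j))‖
            ≤ (‖z‖ ^ k / (P0 * (k.factorial : ℝ))) * C ^ k := by
              apply mul_le_mul hnormg hprod (norm_nonneg _)
              positivity
          _ = bound k := by
              rw [hbd]
              simp only
              rw [mul_pow]
              field_simp
  have hrepr : ∀ n, contB a b n / poch c n = ∑' k, f n k := by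
    intro n
    rw [contB_eq c z a b ha hb n]
    rw [tsum_eq_sum (s := Finset.range (n + 1))
      (fun k hk => by
        rw [Finset.mem_range, not_lt] at hk
        rw [hf]
        simp only
        rw [wcoef_eq_zero c z (by omega), zero_div])]
    rw [Finset.sum_div]
  have hF : F01 c z = ∑' k, g k := rfl
  rw [hF]
  exact key.congr fun n => (hrepr n).symm

lemma contA_eq (c z : ℂ) (a b : ℕ → ℂ) (ha0 : a 0 = c) (ha : ∀ n, 1 ≤ n → a n = z)
    (hb : ∀ n, b n = c + n) :
    ∀ n, contA a b (n + 1) = c * contB a (fun j => (c + 1) + j) n := by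
  intro n
  induction n using Nat.twoStepInduction with
  | zero => simp [contA, contB, ha0]
  | one =>
    show b 1 * contA a b 1 + a 1 * contA a b 0 = c * (c + 1 + (0 : ℕ))
    rw [hb 1, ha 1 le_rfl]
    simp [contA, ha0]
    ring
  | more n ih1 ih2 =>
    show b (n + 2) * contA a b (n + 2) + a (n + 2) * contA a b (n + 1)
      = c * ((c + 1 + ((n + 1 : ℕ) : ℂ)) * contB a (fun j => (c + 1) + j) (n + 1)
          + a (n + 1) * contB a (fun j => (c + 1) + j) n)
    rw [hb (n + 2), ha (n + 2) (by omega), ha (n + 1) (by omega), ih1, ih2]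
    push_cast
    ring


/-- The approximants of the continued fraction
`c/(c + z/((c+1) + z/((c+2) + ⋯)))` converge to `₀F₁(c+1; z)/₀F₁(c; z)`. -/
theorem continued_fraction_F01 (c z : ℂ) (hc : ∀ n : ℕ, c ≠ -(n : ℂ))
    (hF : F01 c z ≠ 0) (a b : ℕ → ℂ)
    (ha0 : a 0 = c) (ha : ∀ n : ℕ, 1 ≤ n → a n = z)
    (hb : ∀ n : ℕ, b n = c + n) :
    Tendsto (fun n => contA a b (n + 1) / contB a b (n + 1)) atTop
      (𝓝 (F01 (c + 1) z / F01 c z)) := by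
  have hc' : ∀ n : ℕ, c + 1 ≠ -(n : ℂ) := by
    intro n h
    exact hc (n + 1) (by push_cast; linear_combination h)
  set b' : ℕ → ℂ := fun j => (c + 1) + j with hb'def
  have hb' : ∀ n, b' n = (c + 1) + n := fun n => rfl
  have hD : Tendsto (fun n => contB a b n / poch c n) atTop (𝓝 (F01 c z)) :=
    contB_tendsto hc z a b ha hb
  have hD' : Tendsto (fun n => contB a b' n / poch (c + 1) n) atTop (𝓝 (F01 (c + 1) z)) :=
    contB_tendsto hc' z a b' ha hb'
  have key : ∀ n, contA a b (n + 1) / contB a b (n + 1)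
      = (contB a b' n / poch (c + 1) n) / (contB a b (n + 1) / poch c (n + 1)) := by
    intro n
    have hp' : poch (c + 1) n ≠ 0 := poch_ne_zero hc' n
    have hc0 : c ≠ 0 := fun h => hc 0 (by simp [h])
    rw [contA_eq c z a b ha0 ha hb n, poch_succ', div_div_div_comm]
    have h1 : poch (c + 1) n / (c * poch (c + 1) n) = 1 / c := by
      rw [mul_comm, ← div_div, div_self hp']
    rw [h1, div_div_eq_mul_div, div_one, ← hb'def]
    ring
  have hlim : Tendsto (fun n => (contB a b' n / poch (c + 1) n)
      / (contB a b (n + 1) / poch c (n + 1))) atTop (𝓝 (F01 (c + 1) z / F01 c z)) := by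
    apply hD'.div _ hF
    exact hD.comp (tendsto_add_atTop_nat 1)
  exact hlim.congr fun n => (key n).symm
end

section
/- Let q, z ∈ ℂ with |q| < 1. Define a, b : ℕ → ℂ by a_0 = 1, a_n = q^n·z for n ≥ 1, and b_n = 1 for all n, and let A, B be the canonical numerators and denominators of the continued fraction K(a_n/b_n) = 1/(1 + qz/(1 + q²z/(1 + ⋯))). Then B_n → Σ_{k=0}^∞ q^{k²}·z^k/(q)_k and A_n → Σ_{k=0}^∞ q^{k(k+1)}·z^k/(q)_k as n → ∞. -/
open Finset Filter Topology

/-- q-Pochhammer symbol `(q)_k = ∏_{j=1}^k (1 - q^j)`, with `(q)_0 = 1`. -/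
noncomputable def qPoch (q : ℂ) (k : ℕ) : ℂ := ∏ j ∈ Finset.range k, (1 - q ^ (j + 1))

section
variable {q : ℂ}

lemma one_sub_pow_ne (hq : ‖q‖ < 1) (j : ℕ) : (1 : ℂ) - q ^ (j + 1) ≠ 0 := by
  intro h
  have h1 : q ^ (j+1) = 1 := by linear_combination -h
  have h2 : ‖q ^ (j+1)‖ < 1 := by
    rw [norm_pow]
    exact pow_lt_one₀ (norm_nonneg q) hq (Nat.succ_ne_zero j)
  rw [h1, norm_one] at h2
  exact lt_irrefl _ h2

lemma qPoch_zero : qPoch q 0 = 1 := rfl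

lemma qPoch_succ (k : ℕ) : qPoch q (k + 1) = qPoch q k * (1 - q ^ (k + 1)) :=
  Finset.prod_range_succ _ _

lemma qPoch_ne_zero (hq : ‖q‖ < 1) (k : ℕ) : qPoch q k ≠ 0 :=
  Finset.prod_ne_zero_iff.2 fun j _ => one_sub_pow_ne hq j

noncomputable def gb (q : ℂ) (n k : ℕ) : ℂ :=
  if k ≤ n then qPoch q n / (qPoch q k * qPoch q (n - k)) else 0

lemma gb_zero_of_lt {n k : ℕ} (h : n < k) : gb q n k = 0 := if_neg (by omega)

lemma gb_zero_right (hq : ‖q‖ < 1) (n : ℕ) : gb q n 0 = 1 := by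
  rw [gb, if_pos (Nat.zero_le n)]
  simp [qPoch_zero, div_self (qPoch_ne_zero hq n)]

lemma gb_self (hq : ‖q‖ < 1) (n : ℕ) : gb q n n = 1 := by
  rw [gb, if_pos le_rfl]
  simp [qPoch_zero, div_self (qPoch_ne_zero hq n)]

lemma gb_pascal (hq : ‖q‖ < 1) (m k : ℕ) :
    gb q (m + 1) (k + 1) = gb q m (k + 1) + q ^ (m - k) * gb q m k := by
  rcases lt_trichotomy m k with h | rfl | h
  · rw [gb_zero_of_lt (by omega), gb_zero_of_lt (by omega), gb_zero_of_lt h]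
    ring
  · rw [gb_self hq, gb_zero_of_lt (by omega), gb_self hq]
    simp
  · obtain ⟨j, rfl⟩ : ∃ j, m = k + j + 1 := ⟨m - k - 1, by omega⟩
    have e1 : k + j + 1 + 1 - (k + 1) = j + 1 := by omega
    have e2 : k + j + 1 - (k + 1) = j := by omega
    have e3 : k + j + 1 - k = j + 1 := by omega
    rw [gb, gb, gb, if_pos (by omega), if_pos (by omega), if_pos (by omega), e1, e2, e3]
    rw [show k + j + 1 + 1 = (k + j + 1) + 1 from rfl, qPoch_succ (k + j + 1),
      qPoch_succ k, qPoch_succ j]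
    have h1 := qPoch_ne_zero hq (k + j + 1)
    have h2 := qPoch_ne_zero hq k
    have h3 := qPoch_ne_zero hq j
    have h4 := one_sub_pow_ne hq k
    have h5 := one_sub_pow_ne hq j
    field_simp
    ring
end

noncomputable def PP (q w : ℂ) (n : ℕ) : ℂ :=
  ∑ k ∈ Finset.range (n + 1), q ^ (k ^ 2) * w ^ k * gb q (n + 1 - k) k

lemma PP_rec {q : ℂ} (hq : ‖q‖ < 1) (w : ℂ) (n : ℕ) :
    PP q w (n + 2) = PP q w (n + 1) + q ^ (n + 2) * w * PP q w n := by
  have key : ∀ k ∈ Finset.range (n + 2),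
      q ^ ((k+1) ^ 2) * w ^ (k+1) * gb q (n + 3 - (k+1)) (k+1)
      = q ^ ((k+1) ^ 2) * w ^ (k+1) * gb q (n + 1 - k) (k+1)
        + q ^ (n + 2) * w * (q ^ (k ^ 2) * w ^ k * gb q (n + 1 - k) k) := by
    intro k hk
    rw [Finset.mem_range] at hk
    have e1 : n + 3 - (k + 1) = (n + 1 - k) + 1 := by omega
    rw [e1, gb_pascal hq (n + 1 - k) k, mul_add]
    congr 1
    rcases le_or_gt (2 * k) (n + 1) with h2 | h2
    · have e2 : n + 1 - k - k = n + 1 - 2 * k := by omega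
      have e3 : (k+1) ^ 2 + (n + 1 - 2 * k) = (n + 2) + k ^ 2 := by
        have : (k+1) ^ 2 = k ^ 2 + 2 * k + 1 := by ring
        omega
      rw [e2, show q ^ ((k+1) ^ 2) * w ^ (k+1) * (q ^ (n + 1 - 2 * k) * gb q (n + 1 - k) k)
          = q ^ ((k+1) ^ 2) * q ^ (n + 1 - 2 * k) * w ^ (k+1) * gb q (n + 1 - k) k from by
          ring, ← pow_add, e3, pow_add]
      ring
    · rw [gb_zero_of_lt (by omega)]
      ring
  have split3 : PP q w (n + 2)
      = ∑ k ∈ Finset.range (n + 2),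
          q ^ ((k+1) ^ 2) * w ^ (k+1) * gb q (n + 3 - (k+1)) (k+1) + 1 := by
    rw [PP, show n + 2 + 1 = n + 3 from rfl, Finset.sum_range_succ']
    simp [gb_zero_right hq]
  rw [split3, Finset.sum_congr rfl key, Finset.sum_add_distrib]
  have part1 : ∑ k ∈ Finset.range (n + 2),
      q ^ ((k+1) ^ 2) * w ^ (k+1) * gb q (n + 1 - k) (k+1) + 1 = PP q w (n + 1) := by
    calc ∑ k ∈ Finset.range (n + 2), q ^ ((k+1) ^ 2) * w ^ (k+1) * gb q (n + 1 - k) (k+1) + 1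
        = ∑ k ∈ Finset.range (n + 1), q ^ ((k+1) ^ 2) * w ^ (k+1) * gb q (n + 2 - (k+1)) (k+1)
            + q ^ (0 ^ 2) * w ^ 0 * gb q (n + 2 - 0) 0 := by
          conv_lhs => rw [Finset.sum_range_succ]
          have h0 : gb q (n + 1 - (n + 1)) (n + 1 + 1) = 0 := gb_zero_of_lt (by omega)
          rw [h0, mul_zero, add_zero]
          have f0 : q ^ (0 ^ 2) * w ^ 0 * gb q (n + 2 - 0) 0 = 1 := by
            simp [gb_zero_right hq]
          rw [f0]
          congr 1
          apply Finset.sum_congr rfl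
          intro k hk
          have : n + 2 - (k + 1) = n + 1 - k := by omega
          rw [this]
        _ = ∑ k ∈ Finset.range (n + 2), q ^ (k ^ 2) * w ^ k * gb q (n + 2 - k) k :=
          (Finset.sum_range_succ' (fun k => q ^ (k ^ 2) * w ^ k * gb q (n + 2 - k) k)
            (n + 1)).symm
        _ = PP q w (n + 1) := by rw [PP]
  have part2 : ∑ k ∈ Finset.range (n + 2),
      q ^ (n + 2) * w * (q ^ (k ^ 2) * w ^ k * gb q (n + 1 - k) k)
      = q ^ (n + 2) * w * PP q w n := by
    rw [PP, ← Finset.mul_sum]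
    congr 1
    conv_lhs => rw [Finset.sum_range_succ]
    have h0 : gb q (n + 1 - (n + 1)) (n + 1) = 0 := gb_zero_of_lt (by omega)
    rw [h0, mul_zero, add_zero]
  rw [← part1, part2]
  ring

lemma gb_eq {q : ℂ} (hq : ‖q‖ < 1) {m k : ℕ} (h : k ≤ m) :
    gb q m k = (∏ i ∈ Finset.range k, (1 - q ^ (m - k + i + 1))) / qPoch q k := by
  obtain ⟨d, rfl⟩ : ∃ d, m = d + k := ⟨m - k, by omega⟩
  have e1 : d + k - k = d := by omega
  rw [gb, if_pos h, e1]
  have e2 : qPoch q (d + k) = qPoch q d * ∏ i ∈ Finset.range k, (1 - q ^ (d + i + 1)) := by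
    rw [qPoch, Finset.prod_range_add]
    rfl
  rw [e2, mul_comm (qPoch q k) (qPoch q d)]
  rw [mul_div_mul_left _ _ (qPoch_ne_zero hq d)]

lemma gb_norm_le {q : ℂ} (hq : ‖q‖ < 1) (m k : ℕ) :
    ‖gb q m k‖ ≤ (2 / (1 - ‖q‖)) ^ k := by
  have h1 : (0:ℝ) < 1 - ‖q‖ := by linarith
  rcases lt_or_ge m k with h | h
  · rw [gb_zero_of_lt h, norm_zero]
    positivity
  · rw [gb_eq hq h, norm_div, div_pow]
    apply div_le_div₀ (by positivity)
    · calc ‖∏ i ∈ Finset.range k, (1 - q ^ (m - k + i + 1))‖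
          ≤ ∏ i ∈ Finset.range k, ‖(1 - q ^ (m - k + i + 1))‖ := norm_prod_le _ _
        _ ≤ ∏ i ∈ Finset.range k, (2:ℝ) := by
            apply Finset.prod_le_prod (fun _ _ => norm_nonneg _)
            intro i _
            calc ‖(1:ℂ) - q ^ (m - k + i + 1)‖ ≤ ‖(1:ℂ)‖ + ‖q ^ (m - k + i + 1)‖ :=
                  norm_sub_le _ _
              _ ≤ 1 + 1 := by
                  rw [norm_one, norm_pow]
                  have : ‖q‖ ^ (m - k + i + 1) ≤ 1 :=
                    pow_le_one₀ (norm_nonneg q) hq.le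
                  linarith
              _ = 2 := by norm_num
        _ = 2 ^ k := by rw [Finset.prod_const, Finset.card_range]
    · positivity
    · calc (1 - ‖q‖) ^ k = ∏ _i ∈ Finset.range k, (1 - ‖q‖) := by
            rw [Finset.prod_const, Finset.card_range]
        _ ≤ ∏ j ∈ Finset.range k, ‖(1:ℂ) - q ^ (j + 1)‖ := by
            apply Finset.prod_le_prod (fun _ _ => h1.le)
            intro j _
            calc (1:ℝ) - ‖q‖ ≤ 1 - ‖q‖ ^ (j+1) := by
                  have : ‖q‖ ^ (j+1) ≤ ‖q‖ := by
                    apply pow_le_of_le_one (norm_nonneg q) hq.le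
                    omega
                  linarith
              _ = ‖(1:ℂ)‖ - ‖q ^ (j+1)‖ := by rw [norm_one, norm_pow]
              _ ≤ ‖(1:ℂ) - q ^ (j+1)‖ := norm_sub_norm_le _ _
        _ = ‖qPoch q k‖ := by rw [qPoch, norm_prod]

lemma gb_tendsto {q : ℂ} (hq : ‖q‖ < 1) (k : ℕ) :
    Tendsto (fun m => gb q m k) atTop (𝓝 (1 / qPoch q k)) := by
  have hprod : Tendsto (fun m => ∏ i ∈ Finset.range k, (1 - q ^ (m - k + i + 1)))
      atTop (𝓝 1) := by
    have : Tendsto (fun m => ∏ i ∈ Finset.range k, (1 - q ^ (m - k + i + 1)))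
        atTop (𝓝 (∏ _i ∈ Finset.range k, (1:ℂ))) := by
      apply tendsto_finset_prod
      intro i _
      have h0 : Tendsto (fun m : ℕ => q ^ (m - k + i + 1)) atTop (𝓝 0) := by
        apply (tendsto_pow_atTop_nhds_zero_of_norm_lt_one hq).comp
        exact tendsto_atTop_mono (fun m => by omega) (tendsto_sub_atTop_nat k)
      have := tendsto_const_nhds.sub h0 (α := ℕ) (f := fun _ => (1:ℂ))
      simpa using this
    simpa using this
  have := hprod.div_const (qPoch q k)
  apply this.congr'
  filter_upwards [eventually_ge_atTop k] with m hm
  exact (gb_eq hq hm).symm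

lemma summable_bound {q : ℂ} (hq : ‖q‖ < 1) (w : ℂ) :
    Summable (fun k : ℕ => ‖q‖ ^ (k ^ 2) * ‖w‖ ^ k * (2 / (1 - ‖q‖)) ^ k) := by
  set M : ℝ := 2 / (1 - ‖q‖) with hM
  have h1 : (0:ℝ) < 1 - ‖q‖ := by linarith
  have hM0 : 0 ≤ M := by positivity
  apply summable_of_ratio_norm_eventually_le (r := 1/2) (by norm_num)
  have hc : Tendsto (fun k : ℕ => ‖q‖ ^ (2 * k + 1) * (‖w‖ * M)) atTop (𝓝 0) := by
    rw [show (0:ℝ) = 0 * (‖w‖ * M) from by ring]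
    apply Tendsto.mul_const
    apply (tendsto_pow_atTop_nhds_zero_of_norm_lt_one (by simpa using hq)).comp
    exact tendsto_atTop_mono (fun k => by simp only [id_eq]; omega) tendsto_id
  filter_upwards [hc.eventually (eventually_le_nhds (by norm_num : (0:ℝ) < 1/2))]
    with k hk
  show ‖‖q‖ ^ ((k+1) ^ 2) * ‖w‖ ^ (k+1) * M ^ (k+1)‖
      ≤ 1/2 * ‖‖q‖ ^ (k ^ 2) * ‖w‖ ^ k * M ^ k‖
  rw [Real.norm_of_nonneg (by positivity), Real.norm_of_nonneg (by positivity)]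
  have hre : ‖q‖ ^ ((k+1) ^ 2) * ‖w‖ ^ (k+1) * M ^ (k+1)
      = (‖q‖ ^ (2 * k + 1) * (‖w‖ * M)) * (‖q‖ ^ (k ^ 2) * ‖w‖ ^ k * M ^ k) := by
    have e : (k+1) ^ 2 = k ^ 2 + (2 * k + 1) := by ring
    rw [e, pow_add, pow_succ, pow_succ]
    ring
  rw [hre]
  exact mul_le_mul_of_nonneg_right hk (by positivity)

lemma PP_tendsto {q : ℂ} (hq : ‖q‖ < 1) (w : ℂ) :
    Tendsto (PP q w) atTop (𝓝 (∑' k : ℕ, q ^ (k ^ 2) * w ^ k / qPoch q k)) := by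
  set F : ℕ → ℕ → ℂ := fun n k => q ^ (k ^ 2) * w ^ k * gb q (n + 1 - k) k with hF
  have hPP : ∀ n, PP q w n = ∑' k, F n k := by
    intro n
    rw [PP]
    symm
    apply tsum_eq_sum
    intro k hk
    rw [Finset.mem_range] at hk
    have : gb q (n + 1 - k) k = 0 := gb_zero_of_lt (by omega)
    simp [hF, this]
  have main : Tendsto (fun n => ∑' k, F n k) atTop
      (𝓝 (∑' k : ℕ, q ^ (k ^ 2) * w ^ k / qPoch q k)) := by
    apply tendsto_tsum_of_dominated_convergence (summable_bound hq w)
    · intro k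
      have := ((gb_tendsto hq k).const_mul (q ^ (k ^ 2) * w ^ k)).comp
        ((tendsto_sub_atTop_nat k).comp (tendsto_add_atTop_nat 1))
      simp only [Function.comp_def] at this
      rw [show q ^ (k ^ 2) * w ^ k / qPoch q k
          = q ^ (k ^ 2) * w ^ k * (1 / qPoch q k) from by ring]
      exact this
    · filter_upwards with n
      intro k
      rw [hF]
      simp only []
      calc ‖q ^ (k ^ 2) * w ^ k * gb q (n + 1 - k) k‖
          = ‖q‖ ^ (k ^ 2) * ‖w‖ ^ k * ‖gb q (n + 1 - k) k‖ := by
            rw [norm_mul, norm_mul, norm_pow, norm_pow]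
        _ ≤ ‖q‖ ^ (k ^ 2) * ‖w‖ ^ k * (2 / (1 - ‖q‖)) ^ k := by
            apply mul_le_mul_of_nonneg_left (gb_norm_le hq _ _) (by positivity)
  exact main.congr (fun n => (hPP n).symm)

/-- For the continued fraction `1/(1 + qz/(1 + q²z/(1 + ⋯)))`, the canonical
denominators converge to `∑ q^{k²} z^k/(q)_k` and the canonical numerators
converge to `∑ q^{k(k+1)} z^k/(q)_k`. -/
theorem rogers_ramanujan_numerators_denominators (q z : ℂ) (hq : ‖q‖ < 1)
    (a b : ℕ → ℂ) (ha0 : a 0 = 1) (ha : ∀ n : ℕ, 1 ≤ n → a n = q ^ n * z)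
    (hb : ∀ n : ℕ, b n = 1) :
    Tendsto (contB a b) atTop (𝓝 (∑' k : ℕ, q ^ (k ^ 2) * z ^ k / qPoch q k)) ∧
    Tendsto (contA a b) atTop (𝓝 (∑' k : ℕ, q ^ (k * (k + 1)) * z ^ k / qPoch q k)) := by
  have hq' : ‖q‖ < 1 := hq
  have PP0 : ∀ w : ℂ, PP q w 0 = 1 := by
    intro w
    rw [PP]
    simp [gb_zero_right hq']
  have PP1 : ∀ w : ℂ, PP q w 1 = 1 + q * w := by
    intro w
    rw [PP, Finset.sum_range_succ, Finset.sum_range_one]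
    rw [gb_zero_right hq', gb_self hq']
    ring
  have hcontB : ∀ n, contB a b (n + 1) = PP q z n := by
    intro n
    induction n using Nat.twoStepInduction with
    | zero => rw [contB, hb, PP0]
    | one =>
      show b 1 * contB a b 1 + a 1 * contB a b 0 = PP q z 1
      rw [contB, contB, hb, hb, ha 1 le_rfl, PP1]
      ring
    | more n ih1 ih2 =>
      show b (n + 2) * contB a b (n + 2) + a (n + 2) * contB a b (n + 1) = PP q z (n + 2)
      rw [hb, ha (n + 2) (by omega), ih1, ih2, PP_rec hq' z n]
      ring
  have hcontA : ∀ n, contA a b (n + 2) = PP q (q * z) n := by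
    intro n
    induction n using Nat.twoStepInduction with
    | zero =>
      show b 1 * contA a b 1 + a 1 * contA a b 0 = PP q (q * z) 0
      rw [contA, contA, hb, ha0, ha 1 le_rfl, PP0]
      ring
    | one =>
      show b 2 * contA a b 2 + a 2 * contA a b 1 = PP q (q * z) 1
      show b 2 * (b 1 * contA a b 1 + a 1 * contA a b 0) + a 2 * contA a b 1 = PP q (q * z) 1
      rw [contA, contA, hb, hb, ha0, ha 1 le_rfl, ha 2 (by omega), PP1]
      ring
    | more n ih1 ih2 =>
      show b (n + 3) * contA a b (n + 3) + a (n + 3) * contA a b (n + 2) = PP q (q * z) (n + 2)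
      rw [hb, ha (n + 3) (by omega), ih1, ih2, PP_rec hq' (q * z) n]
      ring
  constructor
  · rw [← tendsto_add_atTop_iff_nat 1]
    exact (PP_tendsto hq' z).congr (fun n => (hcontB n).symm)
  · rw [← tendsto_add_atTop_iff_nat 2]
    have heq : (∑' k : ℕ, q ^ (k ^ 2) * (q * z) ^ k / qPoch q k)
        = ∑' k : ℕ, q ^ (k * (k + 1)) * z ^ k / qPoch q k := by
      apply tsum_congr
      intro k
      rw [mul_pow, show k * (k + 1) = k ^ 2 + k from by ring, pow_add]
      ring
    rw [← heq]
    exact (PP_tendsto hq' (q * z)).congr (fun n => (hcontA n).symm)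
end

section
/- Let q ∈ ℝ with q > 1, c ∈ ℝ, and z ∈ ℂ. Define a, b : ℕ → ℂ by a_m = z for all m and b_m = q^{e_m} where e_m = (-1)^m·(c + Σ_{k=0}^{m} (-1)^k·k), and let A, B be the canonical numerators and denominators of the continued fraction K(a_m/b_m). Suppose Σ_{k=0}^∞ (-1)^k·z^k·q^{-k(k-1)/2}/(q)_k ≠ 0. Then the approximants A_n/B_n converge, as n → ∞, to z·q^{-c} · (Σ_{k=0}^∞ (-1)^k·z^k·q^{-k(k+1)/2}/(q)_k)/(Σ_{k=0}^∞ (-1)^k·z^k·q^{-k(k-1)/2}/(q)_k) (a form of the Rogers–Ramanujan continued fraction for |q| > 1; both series converge absolutely). -/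
open Finset Filter Topology

/-- The exponent `e_m = (-1)^m (c + ∑_{k=0}^m (-1)^k k)`. -/
noncomputable def expo (c : ℝ) (m : ℕ) : ℝ :=
  (-1 : ℝ) ^ m * (c + ∑ k ∈ Finset.range (m + 1), (-1 : ℝ) ^ k * k)

namespace RRaux

/-- term of the auxiliary series -/
noncomputable def fterm (x : ℝ) (z : ℂ) (n k : ℕ) : ℂ :=
  z ^ k * (x : ℂ) ^ (k ^ 2 + n * k) / qPoch (x : ℂ) k

/-- the auxiliary series -/
noncomputable def v (x : ℝ) (z : ℂ) (n : ℕ) : ℂ := ∑' k : ℕ, fterm x z n k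

/-- the majorant -/
noncomputable def g (x : ℝ) (z : ℂ) (k : ℕ) : ℝ := (‖z‖ / (1 - x)) ^ k * x ^ (k ^ 2)

variable {x : ℝ} (hx0 : 0 < x) (hx1 : x < 1) {z : ℂ}

lemma qPoch_ofReal (k : ℕ) :
    qPoch (x : ℂ) k = ((∏ j ∈ Finset.range k, (1 - x ^ (j + 1)) : ℝ) : ℂ) := by
  simp [qPoch]

include hx0 hx1 in
lemma prod_lower (k : ℕ) : (1 - x) ^ k ≤ ∏ j ∈ Finset.range k, (1 - x ^ (j + 1)) := by
  rw [show (1-x)^k = ∏ _j ∈ Finset.range k, (1-x) from by rw [Finset.prod_const, Finset.card_range]]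
  refine Finset.prod_le_prod (fun i _ => by linarith) (fun i _ => ?_)
  have : x ^ (i + 1) ≤ x ^ 1 := pow_le_pow_of_le_one hx0.le hx1.le (by omega)
  simpa using by linarith [this]

include hx0 hx1 in
lemma norm_qPoch_ge (k : ℕ) : (1 - x) ^ k ≤ ‖qPoch (x : ℂ) k‖ := by
  rw [qPoch_ofReal, Complex.norm_real]
  exact le_trans (prod_lower hx0 hx1 k) (le_abs_self _)

include hx0 hx1 in
lemma qPoch_ne_zero (k : ℕ) : qPoch (x : ℂ) k ≠ 0 := by
  have h := norm_qPoch_ge hx0 hx1 k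
  have : (0:ℝ) < (1 - x) ^ k := pow_pos (by linarith) k
  intro hzero
  rw [hzero, norm_zero] at h
  linarith

include hx0 hx1 in
lemma norm_fterm_le (n k : ℕ) :
    ‖fterm x z n k‖ ≤ (‖z‖ / (1 - x)) ^ k * x ^ (k ^ 2 + n * k) := by
  have hx1' : (0:ℝ) < 1 - x := by linarith
  have hP := norm_qPoch_ge hx0 hx1 k
  have hPpos : (0:ℝ) < (1 - x) ^ k := pow_pos hx1' k
  have hnum : ‖z ^ k * (x : ℂ) ^ (k ^ 2 + n * k)‖ = ‖z‖ ^ k * x ^ (k ^ 2 + n * k) := by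
    rw [norm_mul, norm_pow, norm_pow, Complex.norm_real, Real.norm_eq_abs, abs_of_pos hx0]
  rw [fterm, norm_div, hnum, div_pow, div_mul_eq_mul_div]
  exact div_le_div_of_nonneg_left (by positivity) hPpos hP

include hx0 hx1 in
lemma summable_g : Summable (g x z) := by
  have hx1' : (0:ℝ) < 1 - x := by linarith
  set C : ℝ := ‖z‖ / (1 - x) with hC
  have hC0 : 0 ≤ C := by positivity
  apply Summable.of_norm_bounded_eventually_nat (g := fun k => (1/2 : ℝ) ^ k)
    (summable_geometric_of_lt_one (by norm_num) (by norm_num))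
  have hxk : Tendsto (fun k : ℕ => C * x ^ k) atTop (𝓝 0) := by
    simpa using (tendsto_pow_atTop_nhds_zero_of_lt_one hx0.le hx1).const_mul C
  filter_upwards [hxk.eventually_le_const (by norm_num : (0:ℝ) < 1/2),
    eventually_ge_atTop 1] with k hk hk1
  have h1 : g x z k = (C * x ^ k) ^ k := by
    rw [g, mul_pow, ← pow_mul, pow_two]
  rw [Real.norm_eq_abs, h1, abs_of_nonneg (by positivity)]
  exact pow_le_pow_left₀ (by positivity) hk k

include hx0 hx1 in
lemma norm_fterm_le_g (n k : ℕ) : ‖fterm x z n k‖ ≤ g x z k := by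
  refine (norm_fterm_le hx0 hx1 n k).trans ?_
  rw [g]
  have h1x : (0:ℝ) < 1 - x := by linarith
  exact mul_le_mul_of_nonneg_left
    (pow_le_pow_of_le_one hx0.le hx1.le (by omega))
    (pow_nonneg (div_nonneg (norm_nonneg z) h1x.le) k)

include hx0 hx1 in
lemma summable_fterm (n : ℕ) : Summable (fterm x z n) :=
  Summable.of_norm_bounded (summable_g hx0 hx1) (norm_fterm_le_g hx0 hx1 n)

include hx0 hx1 in
lemma norm_fterm_succ_le (n k : ℕ) : ‖fterm x z n (k+1)‖ ≤ x ^ n * g x z (k+1) := by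
  refine (norm_fterm_le hx0 hx1 n (k+1)).trans ?_
  rw [g, mul_comm (x ^ n), mul_assoc, ← pow_add]
  have h1x : (0:ℝ) < 1 - x := by linarith
  exact mul_le_mul_of_nonneg_left
    (pow_le_pow_of_le_one hx0.le hx1.le (by nlinarith))
    (pow_nonneg (div_nonneg (norm_nonneg z) h1x.le) (k+1))

include hx0 hx1 in
lemma one_sub_xpow_ne (k : ℕ) : (1 : ℂ) - (x : ℂ) ^ (k + 1) ≠ 0 := by
  have hlt : x ^ (k+1) < 1 := pow_lt_one₀ hx0.le hx1 (by omega)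
  intro h
  have h2 : ((x ^ (k+1) : ℝ) : ℂ) = ((1:ℝ) : ℂ) := by push_cast; linear_combination -h
  have h3 : x ^ (k+1) = 1 := Complex.ofReal_injective h2
  linarith

include hx0 hx1 in
lemma fterm_step (n k : ℕ) :
    fterm x z n (k+1) - fterm x z (n+1) (k+1) = z * (x : ℂ) ^ (n+1) * fterm x z (n+2) k := by
  have hP : qPoch (x:ℂ) (k+1) = qPoch (x:ℂ) k * (1 - (x:ℂ) ^ (k+1)) :=
    Finset.prod_range_succ _ k
  have hPk := qPoch_ne_zero hx0 hx1 k
  have h1 := one_sub_xpow_ne hx0 hx1 k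
  rw [fterm, fterm, fterm, hP]
  have he1 : (k+1)^2 + (n+1)*(k+1) = ((k+1)^2 + n*(k+1)) + (k+1) := by ring
  have he2 : (k+1)^2 + n*(k+1) = (n+1) + (k^2 + (n+2)*k) := by ring
  rw [he1, he2]
  field_simp
  ring

include hx0 hx1 in
lemma v_eq (n : ℕ) : v x z n = v x z (n+1) + z * (x:ℂ) ^ (n+1) * v x z (n+2) := by
  have hsn := summable_fterm hx0 hx1 (z := z) n
  have hsn1 := summable_fterm hx0 hx1 (z := z) (n+1)
  have hsn2 := summable_fterm hx0 hx1 (z := z) (n+2)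
  have key : v x z n - v x z (n+1) = z * (x:ℂ) ^ (n+1) * v x z (n+2) := by
    rw [v, v, ← Summable.tsum_sub hsn hsn1]
    rw [Summable.tsum_eq_zero_add (hsn.sub hsn1)]
    have h0 : fterm x z n 0 - fterm x z (n+1) 0 = 0 := by
      simp [fterm, qPoch]
    rw [h0, zero_add]
    calc ∑' k, (fterm x z n (k+1) - fterm x z (n+1) (k+1))
        = ∑' k, z * (x:ℂ) ^ (n+1) * fterm x z (n+2) k :=
          tsum_congr (fun k => fterm_step hx0 hx1 n k)
      _ = z * (x:ℂ) ^ (n+1) * v x z (n+2) := tsum_mul_left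
  linear_combination key

/-- bound for the tail -/
noncomputable def M (x : ℝ) (z : ℂ) : ℝ := ∑' k : ℕ, g x z (k+1)

include hx0 hx1 in
lemma M_nonneg : 0 ≤ M x z := by
  have h1x : (0:ℝ) < 1 - x := by linarith
  exact tsum_nonneg fun k => mul_nonneg
    (pow_nonneg (div_nonneg (norm_nonneg z) h1x.le) _) (by positivity)

include hx0 hx1 in
lemma v_sub_one_norm (n : ℕ) : ‖v x z n - 1‖ ≤ x ^ n * M x z := by
  have hsn := summable_fterm hx0 hx1 (z := z) n
  have hsg : Summable (fun k => g x z (k+1)) :=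
    (summable_g hx0 hx1).comp_injective (add_left_injective 1)
  have h0 : fterm x z n 0 = 1 := by simp [fterm, qPoch]
  have : v x z n - 1 = ∑' k, fterm x z n (k+1) := by
    rw [v, Summable.tsum_eq_zero_add hsn, h0]; ring
  rw [this]
  calc ‖∑' k, fterm x z n (k+1)‖
      ≤ ∑' k, ‖fterm x z n (k+1)‖ := norm_tsum_le_tsum_norm
        ((hsn.comp_injective (add_left_injective 1)).norm)
    _ ≤ ∑' k, x ^ n * g x z (k+1) := Summable.tsum_le_tsum
        (fun k => norm_fterm_succ_le hx0 hx1 n k)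
        ((hsn.comp_injective (add_left_injective 1)).norm) (hsg.mul_left _)
    _ = x ^ n * M x z := tsum_mul_left

include hx0 hx1 in
lemma norm_v_le (n : ℕ) : ‖v x z n‖ ≤ 1 + M x z := by
  have h := v_sub_one_norm hx0 hx1 (z := z) n
  have h2 : x ^ n * M x z ≤ M x z := by
    have := M_nonneg hx0 hx1 (z := z)
    nlinarith [pow_le_one₀ hx0.le hx1.le (n := n), pow_nonneg hx0.le n]
  calc ‖v x z n‖ ≤ ‖v x z n - 1‖ + ‖(1:ℂ)‖ := by
        simpa using norm_add_le (v x z n - 1) 1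
    _ ≤ 1 + M x z := by simp at *; linarith

include hx0 hx1 in
lemma tendsto_v : Tendsto (fun n => v x z n) atTop (𝓝 1) := by
  rw [tendsto_iff_norm_sub_tendsto_zero]
  apply squeeze_zero (fun n => norm_nonneg _) (fun n => v_sub_one_norm hx0 hx1 n)
  simpa using (tendsto_pow_atTop_nhds_zero_of_lt_one hx0.le hx1).mul_const (M x z)

include hx0 hx1 in
/-- boundedness of solutions of the recurrence -/
lemma u_bounded (u : ℕ → ℂ)
    (hu : ∀ n, u (n+2) = u (n+1) + z * (x:ℂ) ^ (n+1) * u n) :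
    ∃ C : ℝ, 0 ≤ C ∧ ∀ n, ‖u n‖ ≤ C := by
  have h1x : (0:ℝ) < 1 - x := by linarith
  set M0 : ℝ := max ‖u 0‖ ‖u 1‖ with hM0
  have hM0n : 0 ≤ M0 := le_trans (norm_nonneg _) (le_max_left _ _)
  set P : ℕ → ℝ := fun n => M0 * ∏ k ∈ Finset.range n, (1 + ‖z‖ * x ^ (k+1)) with hP
  have hPpos : ∀ n, 0 ≤ P n := fun n => mul_nonneg hM0n
    (Finset.prod_nonneg fun i _ => by positivity)
  have hmain : ∀ n, ‖u n‖ ≤ P n ∧ ‖u (n+1)‖ ≤ P n := by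
    intro n
    induction n with
    | zero => constructor <;> simp [hP, hM0, le_max_left, le_max_right]
    | succ n ih =>
      have hstep : P n ≤ P (n+1) := by
        rw [hP]
        simp only
        rw [Finset.prod_range_succ, ← mul_assoc]
        exact le_mul_of_one_le_right (hPpos n)
          (by nlinarith [mul_nonneg (norm_nonneg z) (pow_pos hx0 (n+1)).le])
      refine ⟨ih.2.trans hstep, ?_⟩
      rw [hu n]
      calc ‖u (n+1) + z * (x:ℂ) ^ (n+1) * u n‖
          ≤ ‖u (n+1)‖ + ‖z‖ * x ^ (n+1) * ‖u n‖ := by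
            refine (norm_add_le _ _).trans ?_
            gcongr
            rw [norm_mul, norm_mul, norm_pow, Complex.norm_real,
              Real.norm_eq_abs, abs_of_pos hx0]
        _ ≤ P n + ‖z‖ * x ^ (n+1) * P n :=
            add_le_add ih.2 (mul_le_mul_of_nonneg_left ih.1 (by positivity))
        _ = P (n+1) := by rw [hP]; simp only; rw [Finset.prod_range_succ]; ring
  have hPbound : ∀ n, P n ≤ M0 * Real.exp (‖z‖ * (x / (1 - x))) := by
    intro n
    rw [hP]
    simp only
    refine mul_le_mul_of_nonneg_left ?_ hM0n
    calc ∏ k ∈ Finset.range n, (1 + ‖z‖ * x ^ (k+1))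
        ≤ ∏ k ∈ Finset.range n, Real.exp (‖z‖ * x ^ (k+1)) := by
          refine Finset.prod_le_prod (fun i _ => by positivity) (fun i _ => ?_)
          linarith [Real.add_one_le_exp (‖z‖ * x ^ (i+1))]
      _ = Real.exp (∑ k ∈ Finset.range n, ‖z‖ * x ^ (k+1)) := (Real.exp_sum _ _).symm
      _ ≤ Real.exp (‖z‖ * (x / (1 - x))) := by
          apply Real.exp_le_exp.mpr
          rw [← Finset.mul_sum]
          refine mul_le_mul_of_nonneg_left ?_ (norm_nonneg z)
          have hsum : ∀ k ∈ Finset.range n, x ^ (k+1) = x * x ^ k := fun k _ => by ring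
          rw [Finset.sum_congr rfl hsum, ← Finset.mul_sum, div_eq_mul_inv]
          refine mul_le_mul_of_nonneg_left ?_ hx0.le
          exact le_trans (Summable.sum_le_tsum (Finset.range n) (fun i _ => by positivity)
            (summable_geometric_of_lt_one hx0.le hx1))
            (le_of_eq (tsum_geometric_of_lt_one hx0.le hx1))
  exact ⟨M0 * Real.exp (‖z‖ * (x / (1 - x))), by positivity,
    fun n => (hmain n).1.trans (hPbound n)⟩

include hx0 hx1 in
/-- the main convergence lemma -/
lemma u_tendsto (u : ℕ → ℂ)
    (hu : ∀ n, u (n+2) = u (n+1) + z * (x:ℂ) ^ (n+1) * u n) :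
    Tendsto (fun n => u (n+1)) atTop
      (𝓝 (u 1 * v x z 1 + z * (x:ℂ) * u 0 * v x z 2)) := by
  obtain ⟨C, hC0, hC⟩ := u_bounded hx0 hx1 u hu
  set W : ℕ → ℂ := fun n => u (n+1) * v x z (n+1) + z * (x:ℂ) ^ (n+1) * u n * v x z (n+2)
    with hW
  have hWconst : ∀ n, W n = W 0 := by
    intro n
    induction n with
    | zero => rfl
    | succ n ih =>
      rw [← ih, hW]
      simp only
      have hv := v_eq hx0 hx1 (z := z) (n+1)
      have hu' := hu n
      have hsub : z * (x:ℂ) ^ (n+2) * v x z (n+3) = v x z (n+1) - v x z (n+2) := by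
        linear_combination -hv
      calc u (n+2) * v x z (n+2) + z * (x:ℂ) ^ (n+2) * u (n+1) * v x z (n+3)
          = u (n+2) * v x z (n+2) + u (n+1) * (z * (x:ℂ) ^ (n+2) * v x z (n+3)) := by ring
        _ = u (n+2) * v x z (n+2) + u (n+1) * (v x z (n+1) - v x z (n+2)) := by rw [hsub]
        _ = u (n+1) * v x z (n+1) + (u (n+2) - u (n+1)) * v x z (n+2) := by ring
        _ = u (n+1) * v x z (n+1) + z * (x:ℂ) ^ (n+1) * u n * v x z (n+2) := by
            rw [hu']; ring
  have hW0 : W 0 = u 1 * v x z 1 + z * (x:ℂ) * u 0 * v x z 2 := by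
    rw [hW]; simp
  rw [tendsto_iff_norm_sub_tendsto_zero]
  have hbound : ∀ n : ℕ, ‖u (n+1) - (u 1 * v x z 1 + z * (x:ℂ) * u 0 * v x z 2)‖
      ≤ (C * M x z + ‖z‖ * C * (1 + M x z)) * x ^ (n+1) := by
    intro n
    have hcur : u (n+1) - W 0
        = u (n+1) * (1 - v x z (n+1)) - z * (x:ℂ) ^ (n+1) * u n * v x z (n+2) := by
      rw [← hWconst n, hW]; simp only; ring
    rw [← hW0, hcur]
    have hb1 : ‖u (n+1) * (1 - v x z (n+1))‖ ≤ C * (x ^ (n+1) * M x z) := by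
      rw [norm_mul]
      have : ‖(1:ℂ) - v x z (n+1)‖ = ‖v x z (n+1) - 1‖ := by rw [norm_sub_rev]
      rw [this]
      exact mul_le_mul (hC _) (v_sub_one_norm hx0 hx1 (n+1)) (norm_nonneg _) hC0
    have hb2 : ‖z * (x:ℂ) ^ (n+1) * u n * v x z (n+2)‖
        ≤ ‖z‖ * x ^ (n+1) * C * (1 + M x z) := by
      rw [norm_mul, norm_mul, norm_mul, norm_pow, Complex.norm_real,
        Real.norm_eq_abs, abs_of_pos hx0]
      have hM := M_nonneg hx0 hx1 (z := z)
      refine mul_le_mul (mul_le_mul_of_nonneg_left (hC n) (by positivity))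
        (norm_v_le hx0 hx1 (n+2)) (norm_nonneg _) (by positivity)
    calc ‖u (n+1) * (1 - v x z (n+1)) - z * (x:ℂ) ^ (n+1) * u n * v x z (n+2)‖
        ≤ ‖u (n+1) * (1 - v x z (n+1))‖ + ‖z * (x:ℂ) ^ (n+1) * u n * v x z (n+2)‖ :=
          norm_sub_le _ _
      _ ≤ C * (x ^ (n+1) * M x z) + ‖z‖ * x ^ (n+1) * C * (1 + M x z) := by
          linarith
      _ = (C * M x z + ‖z‖ * C * (1 + M x z)) * x ^ (n+1) := by ring
  apply squeeze_zero (fun n => norm_nonneg _) hbound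
  have : Tendsto (fun n : ℕ => x ^ (n+1)) atTop (𝓝 0) :=
    (tendsto_pow_atTop_nhds_zero_of_lt_one hx0.le hx1).comp (tendsto_add_atTop_nat 1)
  simpa using this.const_mul (C * M x z + ‖z‖ * C * (1 + M x z))

lemma expo_add (c : ℝ) (n : ℕ) : expo c n + expo c (n + 1) = (n : ℝ) + 1 := by
  unfold expo
  rw [Finset.sum_range_succ (fun k => (-1:ℝ)^k * k) (n+1)]
  rcases Nat.even_or_odd n with h | h
  · rw [h.neg_one_pow, h.add_one.neg_one_pow]
    push_cast; ring
  · rw [h.neg_one_pow, h.add_one.neg_one_pow]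
    push_cast; ring

lemma expo_zero (c : ℝ) : expo c 0 = c := by simp [expo]

lemma qPoch_step (w : ℂ) (k : ℕ) : qPoch w (k+1) = qPoch w k * (1 - w^(k+1)) :=
  Finset.prod_range_succ _ _

lemma qPoch_transform {q : ℝ} (hq : 1 < q) (k : ℕ) :
    qPoch (q:ℂ) k = (-1:ℂ)^k * (q:ℂ)^(k*(k+1)/2) * qPoch (((q⁻¹ : ℝ)):ℂ) k := by
  have hq0 : (0:ℝ) < q := lt_trans one_pos hq
  have hqc : (q:ℂ) ≠ 0 := by exact_mod_cast hq0.ne'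
  have hx : ((q⁻¹:ℝ):ℂ) = (q:ℂ)⁻¹ := by push_cast; ring
  induction k with
  | zero => simp [qPoch]
  | succ k ih =>
    rw [qPoch_step, qPoch_step, ih,
      show (k+1)*(k+1+1)/2 = k*(k+1)/2 + (k+1) from by
        have h1 : (k+1)*(k+1+1) = k*(k+1) + 2*(k+1) := by ring
        obtain ⟨m, hm⟩ := Nat.even_mul_succ_self k
        omega, pow_add, pow_succ, hx]
    field_simp
    rw [div_pow, one_pow, pow_add]
    field_simp
    ring

lemma term_eq {q : ℝ} (hq : 1 < q) (z : ℂ) (n k : ℕ) (r : ℝ)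
    (hr : r = ((k*(k+1)/2 : ℕ) : ℝ) - ((k^2 + n*k : ℕ) : ℝ)) :
    (-1:ℂ)^k * z^k * ((q ^ r : ℝ) : ℂ) / qPoch (q:ℂ) k = fterm q⁻¹ z n k := by
  have hq0 : (0:ℝ) < q := lt_trans one_pos hq
  have hx0 : (0:ℝ) < q⁻¹ := by positivity
  have hx1 : q⁻¹ < 1 := inv_lt_one_of_one_lt₀ hq
  have hrq : (q ^ r : ℝ) = q ^ (k*(k+1)/2 : ℕ) * (q⁻¹) ^ (k^2 + n*k) := by
    rw [hr, Real.rpow_sub hq0, Real.rpow_natCast, Real.rpow_natCast, inv_pow]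
    rw [div_eq_mul_inv]
  have hPx : qPoch ((q⁻¹:ℝ):ℂ) k ≠ 0 := qPoch_ne_zero hx0 hx1 k
  have hqc : (q:ℂ) ≠ 0 := by exact_mod_cast hq0.ne'
  have hneg : ((-1:ℂ))^k ≠ 0 := pow_ne_zero k (by norm_num)
  rw [fterm, qPoch_transform hq k, hrq]
  push_cast
  push_cast at hPx
  rw [show ∀ w P : ℂ, (-1:ℂ)^k * z^k * ((q:ℂ)^(k*(k+1)/2) * w) / ((-1:ℂ)^k * (q:ℂ)^(k*(k+1)/2) * P)
      = ((-1:ℂ)^k * (q:ℂ)^(k*(k+1)/2)) * (z^k * w) / (((-1:ℂ)^k * (q:ℂ)^(k*(k+1)/2)) * P) from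
      fun w P => by ring_nf,
    mul_div_mul_left _ _ (mul_ne_zero hneg (pow_ne_zero _ hqc))]

end RRaux

open RRaux in
/-- A form of the Rogers–Ramanujan continued fraction for `|q| > 1`:
the approximants of `K(z / q^{e_m})` converge to
`z q^{-c} (∑ (-1)^k z^k q^{-k(k+1)/2}/(q)_k)/(∑ (-1)^k z^k q^{-k(k-1)/2}/(q)_k)`. -/
theorem rogers_ramanujan_q_gt_one (q : ℝ) (hq : 1 < q) (c : ℝ) (z : ℂ)
    (hne : (∑' k : ℕ, (-1 : ℂ) ^ k * z ^ k *
        ((q ^ (-((k * (k - 1) : ℝ)) / 2) : ℝ) : ℂ) / qPoch (q : ℂ) k) ≠ 0)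
    (a b : ℕ → ℂ) (ha : ∀ m : ℕ, a m = z)
    (hb : ∀ m : ℕ, b m = ((q ^ expo c m : ℝ) : ℂ)) :
    Tendsto (fun n => contA a b (n + 1) / contB a b (n + 1)) atTop
      (𝓝 (z * ((q ^ (-c) : ℝ) : ℂ) *
        (∑' k : ℕ, (-1 : ℂ) ^ k * z ^ k *
          ((q ^ (-((k * (k + 1) : ℝ)) / 2) : ℝ) : ℂ) / qPoch (q : ℂ) k) /
        (∑' k : ℕ, (-1 : ℂ) ^ k * z ^ k *
          ((q ^ (-((k * (k - 1) : ℝ)) / 2) : ℝ) : ℂ) / qPoch (q : ℂ) k))) := by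
  have hq0 : (0:ℝ) < q := lt_trans one_pos hq
  have hx0 : (0:ℝ) < q⁻¹ := by positivity
  have hx1 : q⁻¹ < 1 := inv_lt_one_of_one_lt₀ hq
  -- tsum identifications
  have hcast : ∀ k : ℕ, ((k*(k+1)/2 : ℕ) : ℝ) = (k:ℝ)*(k+1)/2 := by
    intro k
    rw [Nat.cast_div (Nat.even_mul_succ_self k).two_dvd (by norm_num)]
    push_cast; ring
  have hD : (∑' k : ℕ, (-1 : ℂ) ^ k * z ^ k *
      ((q ^ (-((k * (k - 1) : ℝ)) / 2) : ℝ) : ℂ) / qPoch (q : ℂ) k) = v q⁻¹ z 0 :=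
    tsum_congr fun k => term_eq hq z 0 k _ (by rw [hcast k]; push_cast; ring)
  have hN : (∑' k : ℕ, (-1 : ℂ) ^ k * z ^ k *
      ((q ^ (-((k * (k + 1) : ℝ)) / 2) : ℝ) : ℂ) / qPoch (q : ℂ) k) = v q⁻¹ z 1 :=
    tsum_congr fun k => term_eq hq z 1 k _ (by rw [hcast k]; push_cast; ring)
  have hv0ne : v q⁻¹ z 0 ≠ 0 := hD ▸ hne
  -- b facts
  have hbne : ∀ m, b m ≠ 0 := by
    intro m; rw [hb m]
    exact_mod_cast (Real.rpow_pos_of_pos hq0 _).ne'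
  have hbb : ∀ n : ℕ, (b n)⁻¹ * (b (n+1))⁻¹ = ((q⁻¹ : ℝ):ℂ)^(n+1) := by
    intro n
    rw [hb n, hb (n+1), ← Complex.ofReal_inv, ← Complex.ofReal_inv,
      ← Complex.ofReal_mul, ← Complex.ofReal_pow]
    congr 1
    rw [← mul_inv, ← Real.rpow_add hq0, expo_add,
      show ((n:ℝ)+1) = ((n+1 : ℕ):ℝ) from by push_cast; ring,
      Real.rpow_natCast, ← inv_pow]
  -- the transformed sequences
  set ρ : ℕ → ℂ := fun n => ∏ k ∈ Finset.range n, (b k)⁻¹ with hρ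
  have hρne : ∀ n, ρ n ≠ 0 := fun n =>
    Finset.prod_ne_zero_iff.mpr fun i _ => inv_ne_zero (hbne i)
  have hρsucc : ∀ n, ρ (n+1) = ρ n * (b n)⁻¹ := fun n => Finset.prod_range_succ _ _
  set α : ℕ → ℂ := fun n => ρ n * contA a b n with hα
  set β : ℕ → ℂ := fun n => ρ n * contB a b n with hβ
  have hαrec : ∀ n, α (n+2) = α (n+1) + z * ((q⁻¹:ℝ):ℂ)^(n+1) * α n := by
    intro n
    show ρ (n+2) * contA a b (n+2)
      = ρ (n+1) * contA a b (n+1) + z * ((q⁻¹:ℝ):ℂ)^(n+1) * (ρ n * contA a b n)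
    rw [show contA a b (n+2) = b (n+1) * contA a b (n+1) + a (n+1) * contA a b n from by
      simp [contA]]
    rw [ha (n+1), hρsucc (n+1), hρsucc n]
    have h1 : (b (n+1))⁻¹ * b (n+1) = 1 := inv_mul_cancel₀ (hbne (n+1))
    have h2 := hbb n
    linear_combination (ρ n * (b n)⁻¹ * contA a b (n+1)) * h1
      + (z * ρ n * contA a b n) * h2
  have hβrec : ∀ n, β (n+2) = β (n+1) + z * ((q⁻¹:ℝ):ℂ)^(n+1) * β n := by
    intro n
    show ρ (n+2) * contB a b (n+2)
      = ρ (n+1) * contB a b (n+1) + z * ((q⁻¹:ℝ):ℂ)^(n+1) * (ρ n * contB a b n)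
    rw [show contB a b (n+2) = b (n+1) * contB a b (n+1) + a (n+1) * contB a b n from by
      simp [contB]]
    rw [ha (n+1), hρsucc (n+1), hρsucc n]
    have h1 : (b (n+1))⁻¹ * b (n+1) = 1 := inv_mul_cancel₀ (hbne (n+1))
    have h2 := hbb n
    linear_combination (ρ n * (b n)⁻¹ * contB a b (n+1)) * h1
      + (z * ρ n * contB a b n) * h2
  -- initial values
  have hα0 : α 0 = 0 := by simp [hα, contA]
  have hα1 : α 1 = (b 0)⁻¹ * z := by
    simp [hα, hρ, contA, Finset.prod_range_one, ha 0, mul_comm]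
  have hβ0 : β 0 = 1 := by simp [hβ, hρ, contB]
  have hβ1 : β 1 = 1 := by
    simp [hβ, hρ, contB, Finset.prod_range_one, inv_mul_cancel₀ (hbne 0)]
  have hb0 : (b 0)⁻¹ = ((q ^ (-c) : ℝ) : ℂ) := by
    rw [hb 0, expo_zero, ← Complex.ofReal_inv, ← Real.rpow_neg hq0.le]
  -- limits
  have hαt := u_tendsto hx0 hx1 α hαrec
  have hβt := u_tendsto hx0 hx1 β hβrec
  have hnum : α 1 * v q⁻¹ z 1 + z * ((q⁻¹:ℝ):ℂ) * α 0 * v q⁻¹ z 2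
      = z * ((q ^ (-c) : ℝ) : ℂ) * v q⁻¹ z 1 := by
    rw [hα0, hα1, hb0]; ring
  have hden : β 1 * v q⁻¹ z 1 + z * ((q⁻¹:ℝ):ℂ) * β 0 * v q⁻¹ z 2 = v q⁻¹ z 0 := by
    rw [hβ0, hβ1]
    linear_combination - v_eq hx0 hx1 0
  rw [hnum] at hαt
  rw [hden] at hβt
  have hdiv := hαt.div hβt hv0ne
  have hfun : (fun n => contA a b (n+1) / contB a b (n+1))
      = fun n => α (n+1) / β (n+1) := by
    funext n
    exact (mul_div_mul_left _ _ (hρne (n+1))).symm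
  rw [hfun, hN, hD]
  exact hdiv
end
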